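/- Let m ≥ 1 be an integer. There exists a constant c > 0 such that for every t > 0 and every X ∈ ℝ^m with 1 ≤ ‖X‖ ≤ 5, | ∫_{{z ∈ ℝ^m : ‖z‖ ≤ ‖X‖/(10√t)}} e^{−‖z‖²} · ( (X₁ − 2√t·z₁)/‖X − 2√t·z‖^{m+1} − X₁/‖X‖^{m+1} ) dz | ≤ c · t^{1/2}. -/
import Mathlib

open MeasureTheory Real Filter Set

lemma aux_pow_sub_pow {a b M : ℝ} (ha : 0 ≤ a) (hb : 0 ≤ b) (haM : a ≤ M) (hbM : b ≤ M)
    (n : ℕ) : |a ^ (n + 1) - b ^ (n + 1)| ≤ (n + 1) * M ^ n * |a - b| := by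
  have hM : 0 ≤ M := le_trans ha haM
  have h := geom_sum₂_mul a b (n + 1)
  rw [← h, abs_mul]
  have hsum : |∑ i ∈ Finset.range (n + 1), a ^ i * b ^ (n + 1 - 1 - i)| ≤ (n + 1) * M ^ n := by
    calc |∑ i ∈ Finset.range (n + 1), a ^ i * b ^ (n + 1 - 1 - i)|
        ≤ ∑ i ∈ Finset.range (n + 1), |a ^ i * b ^ (n + 1 - 1 - i)| :=
          Finset.abs_sum_le_sum_abs _ _
      _ ≤ ∑ _i ∈ Finset.range (n + 1), M ^ n := by
          apply Finset.sum_le_sum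
          intro i hi
          rw [Finset.mem_range] at hi
          rw [abs_mul, abs_pow, abs_pow, abs_of_nonneg ha, abs_of_nonneg hb]
          calc a ^ i * b ^ (n + 1 - 1 - i) ≤ M ^ i * M ^ (n + 1 - 1 - i) := by gcongr
            _ = M ^ n := by rw [← pow_add]; congr 1; omega
      _ = (n + 1) * M ^ n := by
          rw [Finset.sum_const, Finset.card_range, nsmul_eq_mul]
          push_cast; ring
  calc |∑ i ∈ Finset.range (n + 1), a ^ i * b ^ (n + 1 - 1 - i)| * |a - b|
      ≤ ((n + 1) * M ^ n) * |a - b| := by gcongr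
    _ = (n + 1) * M ^ n * |a - b| := by ring

lemma aux_coord {m : ℕ} (z : EuclideanSpace ℝ (Fin m)) (i : Fin m) : |z i| ≤ ‖z‖ := by
  rw [EuclideanSpace.norm_eq, ← Real.sqrt_sq_eq_abs]
  apply Real.sqrt_le_sqrt
  have : (z i) ^ 2 = ‖z i‖ ^ 2 := by rw [Real.norm_eq_abs, sq_abs]
  rw [this]
  exact Finset.single_le_sum (f := fun j => ‖z j‖ ^ 2) (fun j _ => by positivity)
    (Finset.mem_univ i)

lemma aux_r_exp {r : ℝ} (hr : 0 ≤ r) : r * Real.exp (-r ^ 2) ≤ Real.exp (-(r ^ 2 / 2)) := by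
  have h1 : r ≤ Real.exp (r ^ 2 / 2) := by
    have := Real.add_one_le_exp (r ^ 2 / 2)
    nlinarith
  have h2 : Real.exp (-r ^ 2) = Real.exp (-(r ^ 2 / 2)) * Real.exp (-(r ^ 2 / 2)) := by
    rw [← Real.exp_add]; ring_nf
  rw [h2, ← mul_assoc]
  have h3 : r * Real.exp (-(r ^ 2 / 2)) ≤ 1 := by
    rw [Real.exp_neg]
    rw [mul_inv_le_iff₀ (Real.exp_pos _), one_mul]
    exact h1
  calc r * Real.exp (-(r ^ 2 / 2)) * Real.exp (-(r ^ 2 / 2))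
      ≤ 1 * Real.exp (-(r ^ 2 / 2)) := by gcongr
    _ = _ := one_mul _

lemma aux_gauss_int {m : ℕ} :
    Integrable (fun z : EuclideanSpace ℝ (Fin m) => Real.exp (-(‖z‖ ^ 2 / 2))) := by
  have h := (GaussianFourier.integrable_cexp_neg_mul_sq_norm_add (V := EuclideanSpace ℝ (Fin m))
    (b := (1/2 : ℂ)) (by norm_num) 0 0).norm
  apply h.congr
  filter_upwards with z
  simp [Complex.norm_exp]
  rw [← Complex.ofReal_pow, Complex.ofReal_re]
  ring_nf

lemma aux_key {m : ℕ} (X Y : EuclideanSpace ℝ (Fin m)) (i : Fin m)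
    (hX1 : 1 ≤ ‖X‖) (hX5 : ‖X‖ ≤ 5) (hYX : ‖Y - X‖ ≤ ‖X‖ / 5) :
    |Y i / ‖Y‖ ^ (m + 1) - X i / ‖X‖ ^ (m + 1)| ≤
      ((m : ℝ) + 2) * (15 / 2) ^ (m + 1) * ‖Y - X‖ := by
  have habs := abs_le.mp (abs_norm_sub_norm_le Y X)
  have hYl : (4 / 5 : ℝ) ≤ ‖Y‖ := by linarith [habs.1]
  have hYu : ‖Y‖ ≤ 6 := by linarith [habs.2]
  have hA : (4 / 5 : ℝ) ^ (m + 1) ≤ ‖Y‖ ^ (m + 1) := pow_le_pow_left₀ (by norm_num) hYl _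
  have hApos : (0:ℝ) < ‖Y‖ ^ (m + 1) := lt_of_lt_of_le (by positivity) hA
  have hB : (1 : ℝ) ≤ ‖X‖ ^ (m + 1) := one_le_pow₀ hX1
  have hBpos : (0:ℝ) < ‖X‖ ^ (m + 1) := lt_of_lt_of_le one_pos hB
  have hBu : ‖X‖ ^ (m + 1) ≤ 6 ^ (m + 1) := by gcongr; linarith
  have hdiffpow : |‖X‖ ^ (m + 1) - ‖Y‖ ^ (m + 1)| ≤ ((m:ℝ) + 1) * 6 ^ m * ‖Y - X‖ := by
    have h := aux_pow_sub_pow (norm_nonneg X) (norm_nonneg Y) (by linarith) hYu m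
    refine h.trans ?_
    gcongr
    exact (abs_norm_sub_norm_le X Y).trans_eq (norm_sub_rev X Y)
  have hYXi : |Y i - X i| ≤ ‖Y - X‖ := by
    have := aux_coord (Y - X) i
    simpa using this
  have hXi : |X i| ≤ 5 := le_trans (aux_coord X i) hX5
  set A := ‖Y‖ ^ (m + 1) with hAdef
  set B := ‖X‖ ^ (m + 1) with hBdef
  have heq : Y i / A - X i / B = ((Y i - X i) * B + X i * (B - A)) / (A * B) := by
    field_simp
    ring
  rw [heq, abs_div, abs_of_pos (mul_pos hApos hBpos)]
  have hnum : |(Y i - X i) * B + X i * (B - A)| ≤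
      ‖Y - X‖ * 6 ^ (m + 1) + 5 * (((m:ℝ) + 1) * 6 ^ m * ‖Y - X‖) := by
    calc |(Y i - X i) * B + X i * (B - A)|
        ≤ |(Y i - X i) * B| + |X i * (B - A)| := abs_add_le _ _
      _ = |Y i - X i| * |B| + |X i| * |B - A| := by rw [abs_mul, abs_mul]
      _ ≤ ‖Y - X‖ * 6 ^ (m + 1) + 5 * (((m:ℝ) + 1) * 6 ^ m * ‖Y - X‖) := by
          have hB6 : |B| ≤ 6 ^ (m + 1) := by rw [abs_of_pos hBpos]; exact hBu
          apply add_le_add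
          · exact mul_le_mul hYXi hB6 (abs_nonneg _) (norm_nonneg _)
          · exact mul_le_mul hXi hdiffpow (abs_nonneg _) (by norm_num)
  have hden : (4 / 5 : ℝ) ^ (m + 1) * 1 ≤ A * B := by
    apply mul_le_mul hA hB one_pos.le (le_of_lt hApos)
  calc |(Y i - X i) * B + X i * (B - A)| / (A * B)
      ≤ (‖Y - X‖ * 6 ^ (m + 1) + 5 * (((m:ℝ) + 1) * 6 ^ m * ‖Y - X‖)) /
        ((4 / 5 : ℝ) ^ (m + 1) * 1) := by
        apply div_le_div₀ (by positivity) hnum (by positivity) hden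
    _ ≤ ((m : ℝ) + 2) * (15 / 2) ^ (m + 1) * ‖Y - X‖ := by
        rw [mul_one, div_le_iff₀ (by positivity)]
        have key : (6 : ℝ) ^ (m + 1) + 5 * (((m:ℝ) + 1) * 6 ^ m) ≤
            ((m : ℝ) + 2) * (15 / 2) ^ (m + 1) * (4 / 5) ^ (m + 1) := by
          have h1 : ((15 / 2 : ℝ)) ^ (m + 1) * (4 / 5) ^ (m + 1) = 6 ^ (m + 1) := by
            rw [← mul_pow]; norm_num
          rw [mul_assoc, h1]
          have h2 : (6 : ℝ) ^ (m + 1) = 6 * 6 ^ m := by ring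
          rw [h2]
          have hm6 : (0:ℝ) ≤ 6 ^ m := by positivity
          nlinarith
        calc ‖Y - X‖ * 6 ^ (m + 1) + 5 * (((m:ℝ) + 1) * 6 ^ m * ‖Y - X‖)
            = (6 ^ (m + 1) + 5 * (((m:ℝ) + 1) * 6 ^ m)) * ‖Y - X‖ := by ring
          _ ≤ (((m : ℝ) + 2) * (15 / 2) ^ (m + 1) * (4 / 5) ^ (m + 1)) * ‖Y - X‖ := by
              gcongr
          _ = ((m : ℝ) + 2) * (15 / 2) ^ (m + 1) * ‖Y - X‖ * (4 / 5) ^ (m + 1) := by ring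

theorem stmt3 (m : ℕ) (hm : 0 < m) :
    ∃ c : ℝ, 0 < c ∧ ∀ t : ℝ, 0 < t → ∀ X : EuclideanSpace ℝ (Fin m),
      1 ≤ ‖X‖ → ‖X‖ ≤ 5 →
      |∫ z in {z : EuclideanSpace ℝ (Fin m) | ‖z‖ ≤ ‖X‖ / (10 * Real.sqrt t)},
          Real.exp (-‖z‖ ^ 2) *
            ((X ⟨0, hm⟩ - 2 * Real.sqrt t * z ⟨0, hm⟩) /
                ‖X - (2 * Real.sqrt t) • z‖ ^ (m + 1) -
              X ⟨0, hm⟩ / ‖X‖ ^ (m + 1))| ≤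
        c * Real.sqrt t := by
  set K : ℝ := ((m : ℝ) + 2) * (15 / 2) ^ (m + 1) with hK
  have hKpos : 0 < K := by positivity
  set I : ℝ := ∫ z : EuclideanSpace ℝ (Fin m), Real.exp (-(‖z‖ ^ 2 / 2)) with hI
  have hInn : 0 ≤ I := integral_nonneg fun z => (Real.exp_pos _).le
  refine ⟨2 * K * I + 1, by positivity, ?_⟩
  intro t ht X hX1 hX5
  have hst : 0 < Real.sqrt t := Real.sqrt_pos.mpr ht
  set S := {z : EuclideanSpace ℝ (Fin m) | ‖z‖ ≤ ‖X‖ / (10 * Real.sqrt t)} with hS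
  have hSmeas : MeasurableSet S :=
    (isClosed_le continuous_norm continuous_const).measurableSet
  have hptwise : ∀ z ∈ S,
      |Real.exp (-‖z‖ ^ 2) *
          ((X ⟨0, hm⟩ - 2 * Real.sqrt t * z ⟨0, hm⟩) /
              ‖X - (2 * Real.sqrt t) • z‖ ^ (m + 1) -
            X ⟨0, hm⟩ / ‖X‖ ^ (m + 1))| ≤
        2 * K * Real.sqrt t * Real.exp (-(‖z‖ ^ 2 / 2)) := by
    intro z hz
    rw [hS, Set.mem_setOf_eq] at hz
    set Y := X - (2 * Real.sqrt t) • z with hY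
    have hnYX : ‖Y - X‖ = 2 * Real.sqrt t * ‖z‖ := by
      have : Y - X = -((2 * Real.sqrt t) • z) := by rw [hY]; abel
      rw [this, norm_neg, norm_smul, Real.norm_eq_abs,
        abs_of_pos (by positivity : (0:ℝ) < 2 * Real.sqrt t)]
    have hle : ‖Y - X‖ ≤ ‖X‖ / 5 := by
      rw [hnYX]
      calc 2 * Real.sqrt t * ‖z‖ ≤ 2 * Real.sqrt t * (‖X‖ / (10 * Real.sqrt t)) := by
            gcongr
        _ = ‖X‖ / 5 := by field_simp; ring
    have hYi : Y ⟨0, hm⟩ = X ⟨0, hm⟩ - 2 * Real.sqrt t * z ⟨0, hm⟩ := by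
      rw [hY]; simp [PiLp.sub_apply, PiLp.smul_apply, smul_eq_mul]
    have hkey := aux_key X Y ⟨0, hm⟩ hX1 hX5 hle
    have hz2 : ‖z‖ * Real.exp (-‖z‖ ^ 2) ≤ Real.exp (-(‖z‖ ^ 2 / 2)) :=
      aux_r_exp (norm_nonneg z)
    calc |Real.exp (-‖z‖ ^ 2) *
          ((X ⟨0, hm⟩ - 2 * Real.sqrt t * z ⟨0, hm⟩) /
              ‖X - (2 * Real.sqrt t) • z‖ ^ (m + 1) -
            X ⟨0, hm⟩ / ‖X‖ ^ (m + 1))|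
        = Real.exp (-‖z‖ ^ 2) *
            |Y ⟨0, hm⟩ / ‖Y‖ ^ (m + 1) - X ⟨0, hm⟩ / ‖X‖ ^ (m + 1)| := by
          rw [← hYi, ← hY, abs_mul, abs_of_pos (Real.exp_pos _)]
      _ ≤ Real.exp (-‖z‖ ^ 2) * (K * ‖Y - X‖) := by
          gcongr
      _ = 2 * K * Real.sqrt t * (‖z‖ * Real.exp (-‖z‖ ^ 2)) := by
          rw [hnYX]; ring
      _ ≤ 2 * K * Real.sqrt t * Real.exp (-(‖z‖ ^ 2 / 2)) := by
          gcongr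
  have hint : Integrable (fun z : EuclideanSpace ℝ (Fin m) =>
      2 * K * Real.sqrt t * Real.exp (-(‖z‖ ^ 2 / 2))) := aux_gauss_int.const_mul _
  calc |∫ z in S, Real.exp (-‖z‖ ^ 2) *
          ((X ⟨0, hm⟩ - 2 * Real.sqrt t * z ⟨0, hm⟩) /
              ‖X - (2 * Real.sqrt t) • z‖ ^ (m + 1) -
            X ⟨0, hm⟩ / ‖X‖ ^ (m + 1))|
      ≤ ∫ z in S, |Real.exp (-‖z‖ ^ 2) *
          ((X ⟨0, hm⟩ - 2 * Real.sqrt t * z ⟨0, hm⟩) /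
              ‖X - (2 * Real.sqrt t) • z‖ ^ (m + 1) -
            X ⟨0, hm⟩ / ‖X‖ ^ (m + 1))| := by
        simpa only [Real.norm_eq_abs] using norm_integral_le_integral_norm
          (μ := volume.restrict S) fun z : EuclideanSpace ℝ (Fin m) =>
            Real.exp (-‖z‖ ^ 2) *
              ((X ⟨0, hm⟩ - 2 * Real.sqrt t * z ⟨0, hm⟩) /
                  ‖X - (2 * Real.sqrt t) • z‖ ^ (m + 1) -
                X ⟨0, hm⟩ / ‖X‖ ^ (m + 1))
    _ ≤ ∫ z in S, 2 * K * Real.sqrt t * Real.exp (-(‖z‖ ^ 2 / 2)) := by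
        apply integral_mono_of_nonneg
        · filter_upwards with z using abs_nonneg _
        · exact hint.restrict
        · rw [EventuallyLE, ae_restrict_iff' hSmeas]
          filter_upwards with z hz using hptwise z hz
    _ ≤ ∫ z : EuclideanSpace ℝ (Fin m), 2 * K * Real.sqrt t * Real.exp (-(‖z‖ ^ 2 / 2)) :=
        setIntegral_le_integral hint (by filter_upwards with z using by positivity)
    _ = 2 * K * Real.sqrt t * I := by rw [hI, integral_const_mul]
    _ ≤ (2 * K * I + 1) * Real.sqrt t := by nlinarith
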